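/- arXiv:1806.09139 — 2 statements merged into one kernel-verified Lean document; each statement's English description precedes it below -/
import Mathlib

section
/- Let u : ℝ^N → ℝ be Lipschitz on B₁ with Lipschitz constant L and bounded by M on B₁ (with no integrability assumption outside B₂). Then the tail function Γ^u(x) = ∫_{ℝ^N \ B₂} [F_s(p_u(x,y)) - F_s(-p_u(x,y))] |x-y|^{-(N+2s-1)} dy is Lipschitz on B₁ with ‖Γ^u‖_{C^{0,1}(B₁)} ≤ C(N,s)(1 + L + M). -/
open Set Metric MeasureTheory

namespace Stmt6Aux

noncomputable def g (e τ : ℝ) : ℝ := (1 + τ ^ 2) ^ e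

lemma base_pos (τ : ℝ) : (0:ℝ) < 1 + τ ^ 2 := by positivity

lemma one_le_base (τ : ℝ) : (1:ℝ) ≤ 1 + τ ^ 2 := by nlinarith [sq_nonneg τ]

lemma g_nonneg (e τ : ℝ) : 0 ≤ g e τ := Real.rpow_nonneg (base_pos τ).le _

lemma g_le_one {e : ℝ} (he : e ≤ 0) (τ : ℝ) : g e τ ≤ 1 :=
  Real.rpow_le_one_of_one_le_of_nonpos (one_le_base τ) he

lemma g_anti {e : ℝ} (he : e ≤ 0) {σ τ : ℝ} (h : σ ^ 2 ≤ τ ^ 2) : g e τ ≤ g e σ :=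
  Real.rpow_le_rpow_of_nonpos (base_pos σ) (by linarith) he

lemma g_le_inv {e : ℝ} (he : e ≤ -1) (τ : ℝ) : g e τ ≤ (1 + τ ^ 2)⁻¹ := by
  have h := Real.rpow_le_rpow_of_exponent_le (one_le_base τ) he
  rwa [Real.rpow_neg_one] at h

lemma g_int {e : ℝ} (he : e ≤ -1) : Integrable (g e) := by
  refine integrable_inv_one_add_sq.mono' ?_ (Filter.Eventually.of_forall fun τ => ?_)
  · exact (Measurable.aestronglyMeasurable (by unfold g; fun_prop))
  · rw [Real.norm_eq_abs, abs_of_nonneg (g_nonneg e τ)]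
    exact g_le_inv he τ

lemma tg_le {e : ℝ} (he : e ≤ -1) {t : ℝ} (ht : 0 ≤ t) : t * g e t ≤ 1/2 := by
  have h1 : g e t ≤ (1 + t^2)⁻¹ := g_le_inv he t
  have h2 : t * (1 + t^2)⁻¹ ≤ 1/2 := by
    rw [mul_inv_le_iff₀ (base_pos t)]
    nlinarith [sq_nonneg (t-1)]
  calc t * g e t ≤ t * (1+t^2)⁻¹ := mul_le_mul_of_nonneg_left h1 ht
    _ ≤ 1/2 := h2

variable {e : ℝ} {Fs : ℝ → ℝ}

lemma Fs_decomp (he : e ≤ -1) (hFs : ∀ p, Fs p = ∫ τ in Ioi p, g e τ)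
    {p q : ℝ} (hpq : p ≤ q) :
    Fs p = (∫ τ in Ioc p q, g e τ) + Fs q := by
  rw [hFs p, hFs q, ← Ioc_union_Ioi_eq_Ioi hpq,
    setIntegral_union (Ioc_disjoint_Ioi le_rfl) measurableSet_Ioi
      ((g_int he).integrableOn) ((g_int he).integrableOn)]

lemma Fs_nonneg (hFs : ∀ p, Fs p = ∫ τ in Ioi p, g e τ) (p : ℝ) : 0 ≤ Fs p := by
  rw [hFs p]
  exact setIntegral_nonneg measurableSet_Ioi fun τ _ => g_nonneg e τ

lemma Fs_le_I0 (he : e ≤ -1) (hFs : ∀ p, Fs p = ∫ τ in Ioi p, g e τ) (p : ℝ) :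
    Fs p ≤ ∫ τ, g e τ := by
  rw [hFs p]
  exact setIntegral_le_integral (g_int he) (Filter.Eventually.of_forall (g_nonneg e))

lemma Fs_anti (he : e ≤ -1) (hFs : ∀ p, Fs p = ∫ τ in Ioi p, g e τ) : Antitone Fs := by
  intro p q hpq
  have hd := Fs_decomp he hFs hpq
  have h0 : 0 ≤ ∫ τ in Ioc p q, g e τ :=
    setIntegral_nonneg measurableSet_Ioc fun τ _ => g_nonneg e τ
  linarith

lemma Fs_step (he : e ≤ -1) (hFs : ∀ p, Fs p = ∫ τ in Ioi p, g e τ)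
    {p q B : ℝ} (hpq : p ≤ q) (hB0 : 0 ≤ B) (hB : ∀ τ ∈ Ioc p q, g e τ ≤ B) :
    |Fs p - Fs q| ≤ B * (q - p) := by
  have hd := Fs_decomp he hFs hpq
  have h0 : 0 ≤ ∫ τ in Ioc p q, g e τ :=
    setIntegral_nonneg measurableSet_Ioc fun τ _ => g_nonneg e τ
  have h1 : (∫ τ in Ioc p q, g e τ) ≤ B * (q - p) := by
    calc (∫ τ in Ioc p q, g e τ) ≤ ∫ _ in Ioc p q, B :=
          setIntegral_mono_on ((g_int he).integrableOn)
            (integrableOn_const measure_Ioc_lt_top.ne) measurableSet_Ioc hB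
      _ = B * (q - p) := by
          rw [setIntegral_const, Measure.real, Real.volume_Ioc, smul_eq_mul,
            ENNReal.toReal_ofReal (by linarith)]
          ring
  rw [abs_of_nonneg (by linarith)]
  linarith

lemma Fs_lip (he : e ≤ -1) (hFs : ∀ p, Fs p = ∫ τ in Ioi p, g e τ) (p q : ℝ) :
    |Fs p - Fs q| ≤ |p - q| := by
  rcases le_total p q with h | h
  · have := Fs_step he hFs h zero_le_one (fun τ _ => g_le_one (by linarith) τ)
    rw [one_mul] at this
    calc |Fs p - Fs q| ≤ q - p := this
      _ ≤ |p - q| := by rw [abs_sub_comm]; exact le_abs_self _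
  · have := Fs_step he hFs h zero_le_one (fun τ _ => g_le_one (by linarith) τ)
    rw [one_mul, abs_sub_comm] at this
    calc |Fs p - Fs q| ≤ p - q := this
      _ ≤ |p - q| := le_abs_self _

/-- key ratio estimate, case `d₂ ≤ d₁` -/
lemma Fs_ratio_aux (he : e ≤ -1) (hFs : ∀ p, Fs p = ∫ τ in Ioi p, g e τ)
    {d₁ d₂ : ℝ} (h₂ : 1 ≤ d₂) (hle : d₂ ≤ d₁) (v : ℝ) :
    |Fs (v/d₁) - Fs (v/d₂)| ≤ (d₁ - d₂) / 2 := by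
  have h₁ : 1 ≤ d₁ := le_trans h₂ hle
  have hd₁ : (0:ℝ) < d₁ := by linarith
  have hd₂ : (0:ℝ) < d₂ := by linarith
  rcases le_or_gt 0 v with hv | hv
  · -- 0 ≤ v : v/d₁ ≤ v/d₂
    set p := v/d₁ with hpdef
    have hp0 : 0 ≤ p := div_nonneg hv hd₁.le
    have hpq : v/d₁ ≤ v/d₂ := by
      rw [div_le_div_iff₀ hd₁ hd₂]; nlinarith
    have hgp : ∀ τ ∈ Ioc p (v/d₂), g e τ ≤ g e p := by
      intro τ hτ
      exact g_anti (by linarith) (by nlinarith [hτ.1])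
    have hstep := Fs_step he hFs hpq (g_nonneg e p) hgp
    have htg := tg_le he hp0
    have hv2 : v/d₂ - v/d₁ = p * (d₁ - d₂) / d₂ := by
      rw [hpdef]; field_simp
    have h3 : (d₁ - d₂)/d₂ ≤ d₁ - d₂ := by
      rw [div_le_iff₀ hd₂]; nlinarith
    have h4 : (0:ℝ) ≤ (d₁-d₂)/d₂ := div_nonneg (by linarith) hd₂.le
    calc |Fs (v/d₁) - Fs (v/d₂)| ≤ g e p * (v/d₂ - v/d₁) := hstep
      _ = (p * g e p) * ((d₁-d₂)/d₂) := by rw [hv2]; ring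
      _ ≤ (1/2) * ((d₁-d₂)/d₂) := mul_le_mul_of_nonneg_right htg h4
      _ ≤ (1/2) * (d₁ - d₂) := by nlinarith
      _ = (d₁ - d₂)/2 := by ring
  · -- v < 0 : v/d₂ ≤ v/d₁ ≤ 0
    set q := v/d₁ with hqdef
    have hq0 : q ≤ 0 := div_nonpos_of_nonpos_of_nonneg hv.le hd₁.le
    have hpq : v/d₂ ≤ v/d₁ := by
      rw [div_le_div_iff₀ hd₂ hd₁]; nlinarith
    have hgp : ∀ τ ∈ Ioc (v/d₂) q, g e τ ≤ g e q := by
      intro τ hτ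
      exact g_anti (by linarith) (by nlinarith [hτ.2])
    have hstep := Fs_step he hFs hpq (g_nonneg e q) hgp
    have htg : (-q) * g e q ≤ 1/2 := by
      have := tg_le he (t := -q) (by linarith)
      have hgeq : g e (-q) = g e q := by unfold g; rw [neg_pow]; ring_nf
      rwa [hgeq] at this
    have hv2 : q - v/d₂ = (-q) * (d₁ - d₂) / d₂ := by
      rw [hqdef]; field_simp; ring
    have h3 : (d₁ - d₂)/d₂ ≤ d₁ - d₂ := by
      rw [div_le_iff₀ hd₂]; nlinarith
    have h4 : (0:ℝ) ≤ (d₁-d₂)/d₂ := div_nonneg (by linarith) hd₂.le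
    rw [abs_sub_comm]
    calc |Fs (v/d₂) - Fs (v/d₁)| ≤ g e q * (q - v/d₂) := hstep
      _ = ((-q) * g e q) * ((d₁-d₂)/d₂) := by rw [hv2]; ring
      _ ≤ (1/2) * ((d₁-d₂)/d₂) := mul_le_mul_of_nonneg_right htg h4
      _ ≤ (1/2) * (d₁ - d₂) := by nlinarith
      _ = (d₁ - d₂)/2 := by ring

lemma Fs_ratio (he : e ≤ -1) (hFs : ∀ p, Fs p = ∫ τ in Ioi p, g e τ)
    {d₁ d₂ : ℝ} (h₁ : 1 ≤ d₁) (h₂ : 1 ≤ d₂) (v : ℝ) :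
    |Fs (v/d₁) - Fs (v/d₂)| ≤ |d₁ - d₂| / 2 := by
  rcases le_total d₂ d₁ with h | h
  · have := Fs_ratio_aux he hFs h₂ h v
    rwa [abs_of_nonneg (by linarith : (0:ℝ) ≤ d₁ - d₂)]
  · have := Fs_ratio_aux he hFs h₁ h v
    rw [abs_sub_comm] at this
    rwa [abs_sub_comm d₁ d₂, abs_of_nonneg (by linarith : (0:ℝ) ≤ d₂ - d₁)]

lemma rpow_diff_le {β a b : ℝ} (hβ : 1 ≤ β) (ha : 1 ≤ a) (hab : a ≤ b) :
    a ^ (-β) - b ^ (-β) ≤ β * a ^ (-β) * (b - a) := by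
  have ha0 : (0:ℝ) < a := by linarith
  have hb0 : (0:ℝ) < b := by linarith
  have bern : 1 + β * (a/b - 1) ≤ (a/b) ^ β := by
    have h := one_add_mul_self_le_rpow_one_add
      (by nlinarith [div_pos ha0 hb0] : (-1:ℝ) ≤ a/b - 1) hβ
    have h2 : (1 + (a/b - 1)) = a/b := by ring
    rwa [h2] at h
  have hbeq : b ^ (-β) = a ^ (-β) * (a/b) ^ β := by
    rw [Real.div_rpow ha0.le hb0.le, Real.rpow_neg ha0.le, Real.rpow_neg hb0.le]
    have h1 : a ^ β ≠ 0 := (Real.rpow_pos_of_pos ha0 β).ne'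
    field_simp
  have hfrac : 1 - a/b = (b - a)/b := by field_simp
  have hOne : 1 - (a/b)^β ≤ β * ((b-a)/b) := by rw [← hfrac]; linarith
  have hpos : (0:ℝ) ≤ a ^ (-β) := Real.rpow_nonneg ha0.le _
  have hdivle : (b - a)/b ≤ b - a := by rw [div_le_iff₀ hb0]; nlinarith
  calc a^(-β) - b^(-β) = a^(-β) * (1 - (a/b)^β) := by rw [hbeq]; ring
    _ ≤ a^(-β) * (β * ((b-a)/b)) := mul_le_mul_of_nonneg_left hOne hpos
    _ ≤ a^(-β) * (β * (b-a)) := by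
        have h5 : β * ((b-a)/b) ≤ β * (b-a) :=
          mul_le_mul_of_nonneg_left hdivle (by linarith)
        exact mul_le_mul_of_nonneg_left h5 hpos
    _ = β * a^(-β) * (b-a) := by ring

lemma rpow_anti {β a c : ℝ} (hβ : 0 ≤ β) (hc : 0 < c) (hca : c ≤ a) :
    a^(-β) ≤ c^(-β) :=
  Real.rpow_le_rpow_of_nonpos hc hca (neg_nonpos.2 hβ)

end Stmt6Aux

open Stmt6Aux

set_option maxHeartbeats 1000000 in
/-- Let `s ∈ (1/2,1)` and let `u : ℝ^N → ℝ` be measurable, Lipschitz on `B₁` with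
constant `L` and bounded by `M` on `B₁` (no integrability assumption outside `B₂`).
Then the tail function
`Γ^u(x) = ∫_{ℝ^N \ B₂} [F_s(p_u(x,y)) - F_s(-p_u(x,y))] |x-y|^{-(N+2s-1)} dy`
is Lipschitz on `B₁`, with `‖Γ^u‖_{C^{0,1}(B₁)} ≤ C(N,s)(1+L+M)`. -/
theorem stmt_6 (N : ℕ) (hN : 1 ≤ N) (s : ℝ) (hs : s ∈ Set.Ioo (1/2 : ℝ) 1)
    (Fs : ℝ → ℝ)
    (hFs : ∀ p : ℝ, Fs p = ∫ τ in Set.Ioi p, (1 + τ ^ 2) ^ (-((N : ℝ) + 2 * s) / 2)) :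
    ∃ C > 0, ∀ (u : EuclideanSpace ℝ (Fin N) → ℝ) (L M : ℝ)
      (Γ : EuclideanSpace ℝ (Fin N) → ℝ),
      Measurable u → 0 ≤ L → 0 ≤ M →
      (∀ x ∈ Metric.ball (0 : EuclideanSpace ℝ (Fin N)) 1,
        ∀ y ∈ Metric.ball (0 : EuclideanSpace ℝ (Fin N)) 1, |u x - u y| ≤ L * ‖x - y‖) →
      (∀ x ∈ Metric.ball (0 : EuclideanSpace ℝ (Fin N)) 1, |u x| ≤ M) →
      (∀ x, Γ x = ∫ y in (Metric.ball (0 : EuclideanSpace ℝ (Fin N)) 2)ᶜ,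
          (Fs ((u y - u x) / ‖x - y‖) - Fs (-((u y - u x) / ‖x - y‖))) *
            ‖x - y‖ ^ (-((N : ℝ) + 2 * s - 1))) →
      (∀ x ∈ Metric.ball (0 : EuclideanSpace ℝ (Fin N)) 1, |Γ x| ≤ C * (1 + L + M)) ∧
      (∀ x₁ ∈ Metric.ball (0 : EuclideanSpace ℝ (Fin N)) 1,
       ∀ x₂ ∈ Metric.ball (0 : EuclideanSpace ℝ (Fin N)) 1,
        |Γ x₁ - Γ x₂| ≤ C * (1 + L + M) * ‖x₁ - x₂‖) := by
  obtain ⟨hs1, hs2⟩ := hs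
  have hN1 : (1:ℝ) ≤ (N:ℝ) := by exact_mod_cast hN
  set e : ℝ := -((N : ℝ) + 2 * s) / 2 with hedef
  set β : ℝ := (N : ℝ) + 2 * s - 1 with hbdef
  have he : e ≤ -1 := by rw [hedef]; linarith
  have hβ1 : 1 ≤ β := by rw [hbdef]; linarith
  have hβN : (N:ℝ) < β := by rw [hbdef]; linarith
  have hβ0 : (0:ℝ) < β := by linarith
  have hFs' : ∀ p, Fs p = ∫ τ in Set.Ioi p, g e τ := hFs
  set W : EuclideanSpace ℝ (Fin N) → ℝ := fun y => (1 + ‖y‖) ^ (-β) with hWdef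
  have hWint : Integrable W := by
    rw [hWdef]
    exact integrable_one_add_norm (by rw [finrank_euclideanSpace_fin]; exact hβN)
  have hW0 : ∀ y, 0 ≤ W y := fun y => Real.rpow_nonneg (by positivity) _
  set I0 : ℝ := ∫ τ, g e τ with hI0def
  have hI0 : 0 ≤ I0 := integral_nonneg (g_nonneg e)
  set S := (Metric.ball (0 : EuclideanSpace ℝ (Fin N)) 2)ᶜ with hSdef
  have hSmeas : MeasurableSet S := measurableSet_ball.compl
  set IW : ℝ := ∫ y, W y with hIWdef
  have hIW : 0 ≤ IW := integral_nonneg hW0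
  set IWs : ℝ := ∫ y in S, W y with hIWsdef
  have hIWs0 : 0 ≤ IWs := setIntegral_nonneg hSmeas fun y _ => hW0 y
  have hIWsle : IWs ≤ IW + 1 := by
    have := setIntegral_le_integral (s := S) hWint (Filter.Eventually.of_forall hW0)
    rw [← hIWsdef, ← hIWdef] at this
    linarith
  have h3β : (0:ℝ) < 3 ^ β := Real.rpow_pos_of_pos (by norm_num) β
  set C0 : ℝ := 3 ^ β * (IW + 1) * (2*I0 + 2*I0*β + 3) with hC0def
  have hC0 : 0 < C0 := by
    rw [hC0def]
    have h1 : (0:ℝ) < IW + 1 := by linarith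
    have h2 : (0:ℝ) < 2*I0 + 2*I0*β + 3 := by nlinarith
    positivity
  refine ⟨C0 + 1, by linarith, ?_⟩
  intro u L M Γ hu hL hM hulip hubd hΓ
  -- geometry
  have hgeo : ∀ x ∈ Metric.ball (0 : EuclideanSpace ℝ (Fin N)) 1, ∀ y ∈ S,
      1 ≤ ‖x - y‖ ∧ ‖x - y‖ ^ (-β) ≤ 3^β * W y := by
    intro x hx y hy
    have hxn : ‖x‖ < 1 := mem_ball_zero_iff.1 hx
    have hyn : 2 ≤ ‖y‖ := by
      have : y ∉ Metric.ball (0 : EuclideanSpace ℝ (Fin N)) 2 := hy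
      rw [mem_ball_zero_iff] at this
      linarith [not_lt.1 this]
    have h1 : ‖y‖ - ‖x‖ ≤ ‖x - y‖ := by
      have h := norm_sub_norm_le y x
      rwa [norm_sub_rev] at h
    have hge : 1 ≤ ‖x - y‖ := by linarith
    refine ⟨hge, ?_⟩
    have hge3 : (1 + ‖y‖)/3 ≤ ‖x - y‖ := by linarith
    have hc : (0:ℝ) < (1+‖y‖)/3 := by positivity
    have h2 := rpow_anti hβ0.le hc hge3
    calc ‖x - y‖ ^ (-β) ≤ ((1+‖y‖)/3) ^ (-β) := h2
      _ = 3^β * W y := by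
          rw [hWdef, Real.div_rpow (by positivity) (by norm_num), Real.rpow_neg (by norm_num : (0:ℝ) ≤ 3)]
          field_simp
  have hFm : Measurable Fs := (Fs_anti he hFs').measurable
  -- measurability of the integrand
  have hfm : ∀ x : EuclideanSpace ℝ (Fin N), Measurable (fun y : EuclideanSpace ℝ (Fin N) =>
      (Fs ((u y - u x)/‖x - y‖) - Fs (-((u y - u x)/‖x - y‖))) * ‖x - y‖ ^ (-β)) := by
    intro x
    have hden : Measurable fun y : EuclideanSpace ℝ (Fin N) => ‖x - y‖ :=
      (continuous_const.sub continuous_id).norm.measurable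
    have hp : Measurable fun y : EuclideanSpace ℝ (Fin N) => (u y - u x)/‖x - y‖ :=
      (hu.sub measurable_const).div hden
    have hrw : Measurable fun y : EuclideanSpace ℝ (Fin N) => ‖x - y‖ ^ (-β) := by fun_prop
    exact ((hFm.comp hp).sub (hFm.comp hp.neg)).mul hrw
  -- pointwise bound
  have hbnd : ∀ x ∈ Metric.ball (0 : EuclideanSpace ℝ (Fin N)) 1, ∀ y ∈ S,
      |(Fs ((u y - u x)/‖x - y‖) - Fs (-((u y - u x)/‖x - y‖))) * ‖x - y‖ ^ (-β)|
        ≤ (2*I0*3^β) * W y := by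
    intro x hx y hy
    obtain ⟨hd, hw⟩ := hgeo x hx y hy
    have hw0 : (0:ℝ) ≤ ‖x - y‖ ^ (-β) := Real.rpow_nonneg (by positivity) _
    have hG : |Fs ((u y - u x)/‖x - y‖) - Fs (-((u y - u x)/‖x - y‖))| ≤ 2*I0 := by
      have a1 := Fs_nonneg hFs' ((u y - u x)/‖x - y‖)
      have a2 := Fs_le_I0 he hFs' ((u y - u x)/‖x - y‖)
      have a3 := Fs_nonneg hFs' (-((u y - u x)/‖x - y‖))
      have a4 := Fs_le_I0 he hFs' (-((u y - u x)/‖x - y‖))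
      rw [← hI0def] at a2 a4
      rw [abs_le]; constructor <;> linarith
    rw [abs_mul, abs_of_nonneg hw0]
    calc |Fs ((u y - u x)/‖x - y‖) - Fs (-((u y - u x)/‖x - y‖))| * (‖x - y‖ ^ (-β))
        ≤ (2*I0) * (3^β * W y) :=
          mul_le_mul hG hw hw0 (by linarith)
      _ = (2*I0*3^β) * W y := by ring
  -- integrability of the integrand
  have hint : ∀ x ∈ Metric.ball (0 : EuclideanSpace ℝ (Fin N)) 1,
      IntegrableOn (fun y : EuclideanSpace ℝ (Fin N) =>
        (Fs ((u y - u x)/‖x - y‖) - Fs (-((u y - u x)/‖x - y‖))) * ‖x - y‖ ^ (-β)) S := by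
    intro x hx
    refine ((hWint.integrableOn (s := S)).const_mul (2*I0*3^β)).mono'
      ((hfm x).aestronglyMeasurable) ?_
    filter_upwards [self_mem_ae_restrict hSmeas] with y hy
    rw [Real.norm_eq_abs]
    exact hbnd x hx y hy
  constructor
  · -- uniform bound
    intro x hx
    rw [hΓ x, ← Real.norm_eq_abs]
    have hb := norm_integral_le_of_norm_le (G := ℝ)
      (f := fun y : EuclideanSpace ℝ (Fin N) =>
        (Fs ((u y - u x)/‖x - y‖) - Fs (-((u y - u x)/‖x - y‖))) * ‖x - y‖ ^ (-β))
      (g := fun y => (2*I0*3^β) * W y)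
      ((hWint.integrableOn (s := S)).const_mul (2*I0*3^β))
      (by filter_upwards [self_mem_ae_restrict hSmeas] with y hy
          rw [Real.norm_eq_abs]; exact hbnd x hx y hy)
    refine hb.trans ?_
    rw [integral_const_mul]
    have h1 : (2*I0*3^β) * IWs ≤ C0 := by
      have e1 : (2*I0*3^β) * IWs = 3^β * IWs * (2*I0) := by ring
      rw [e1, hC0def]
      have s1 : 3^β * IWs ≤ 3^β * (IW + 1) := mul_le_mul_of_nonneg_left hIWsle h3β.le
      have s2 : (2*I0 : ℝ) ≤ 2*I0 + 2*I0*β + 3 := by nlinarith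
      have s3 : (0:ℝ) ≤ 3^β * IWs := mul_nonneg h3β.le hIWs0
      nlinarith [mul_nonneg (mul_nonneg h3β.le (by linarith : (0:ℝ) ≤ IW + 1)) (by linarith : (0:ℝ) ≤ 2*I0)]
    have h2 : (1:ℝ) ≤ 1 + L + M := by linarith
    rw [← hIWsdef]
    nlinarith [hC0]
  · -- Lipschitz bound
    intro x₁ hx₁ x₂ hx₂
    rw [hΓ x₁, hΓ x₂, ← integral_sub (hint x₁ hx₁) (hint x₂ hx₂), ← Real.norm_eq_abs]
    -- pointwise Lipschitz estimate
    have hkey : ∀ y ∈ S,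
        |(Fs ((u y - u x₁)/‖x₁ - y‖) - Fs (-((u y - u x₁)/‖x₁ - y‖))) * ‖x₁ - y‖ ^ (-β)
         - (Fs ((u y - u x₂)/‖x₂ - y‖) - Fs (-((u y - u x₂)/‖x₂ - y‖))) * ‖x₂ - y‖ ^ (-β)|
        ≤ ((2*L+1+2*I0*β)*3^β*‖x₁ - x₂‖) * W y := by
      intro y hy
      obtain ⟨hd₁, hw₁⟩ := hgeo x₁ hx₁ y hy
      obtain ⟨hd₂, hw₂⟩ := hgeo x₂ hx₂ y hy
      have hdd : |‖x₁ - y‖ - ‖x₂ - y‖| ≤ ‖x₁ - x₂‖ := by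
        have h := abs_norm_sub_norm_le (x₁ - y) (x₂ - y)
        rwa [sub_sub_sub_cancel_right] at h
      set d₁ := ‖x₁ - y‖ with hd₁def
      set d₂ := ‖x₂ - y‖ with hd₂def
      set p₁ := (u y - u x₁)/d₁ with hp₁def
      set p₂ := (u y - u x₂)/d₂ with hp₂def
      set q := (u y - u x₂)/d₁ with hqdef
      have hLx : |u x₁ - u x₂| ≤ L * ‖x₁ - x₂‖ := hulip x₁ hx₁ x₂ hx₂
      have hpqd : |p₁ - q| ≤ L * ‖x₁ - x₂‖ := by
        have e1 : p₁ - q = (u x₂ - u x₁)/d₁ := by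
          rw [hp₁def, hqdef, div_sub_div_same]; ring_nf
        rw [e1, abs_div, abs_of_nonneg (by linarith : (0:ℝ) ≤ d₁)]
        calc |u x₂ - u x₁| / d₁ ≤ |u x₂ - u x₁| := div_le_self (abs_nonneg _) hd₁
          _ ≤ L * ‖x₁ - x₂‖ := by rw [abs_sub_comm]; exact hLx
      have h1 : |Fs p₁ - Fs q| ≤ L * ‖x₁ - x₂‖ := (Fs_lip he hFs' _ _).trans hpqd
      have h2 : |Fs q - Fs p₂| ≤ ‖x₁ - x₂‖/2 := by
        have h := Fs_ratio he hFs' hd₁ hd₂ (u y - u x₂)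
        rw [← hqdef, ← hp₂def] at h
        refine h.trans ?_
        linarith [hdd]
      have h3 : |Fs (-p₁) - Fs (-q)| ≤ L * ‖x₁ - x₂‖ := by
        refine (Fs_lip he hFs' _ _).trans ?_
        have e1 : -p₁ - -q = -(p₁ - q) := by ring
        rw [e1, abs_neg]
        exact hpqd
      have h4 : |Fs (-q) - Fs (-p₂)| ≤ ‖x₁ - x₂‖/2 := by
        have hq' : -q = (u x₂ - u y)/d₁ := by rw [hqdef, ← neg_div, neg_sub]
        have hp' : -p₂ = (u x₂ - u y)/d₂ := by rw [hp₂def, ← neg_div, neg_sub]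
        rw [hq', hp']
        exact (Fs_ratio he hFs' hd₁ hd₂ _).trans (by linarith [hdd])
      -- weight difference
      have hwd : |d₁^(-β) - d₂^(-β)| ≤ β * (3^β * W y) * ‖x₁ - x₂‖ := by
        have hWy : 0 ≤ W y := hW0 y
        rcases le_total d₁ d₂ with h | h
        · have hle := rpow_diff_le hβ1 hd₁ h
          have h0 : d₂^(-β) ≤ d₁^(-β) := rpow_anti hβ0.le (by linarith) h
          rw [abs_of_nonneg (by linarith)]
          have h5 : d₂ - d₁ ≤ ‖x₁ - x₂‖ := by
            have := le_abs_self (d₂ - d₁)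
            rw [abs_sub_comm] at this
            linarith
          calc d₁^(-β) - d₂^(-β) ≤ β * d₁^(-β) * (d₂ - d₁) := hle
            _ ≤ (β * (3^β * W y)) * ‖x₁ - x₂‖ := by
                refine mul_le_mul (mul_le_mul_of_nonneg_left hw₁ hβ0.le) h5
                  (by linarith) (by positivity)
            _ = β * (3^β * W y) * ‖x₁ - x₂‖ := by ring
        · have hle := rpow_diff_le hβ1 hd₂ h
          have h0 : d₁^(-β) ≤ d₂^(-β) := rpow_anti hβ0.le (by linarith) h
          rw [abs_sub_comm, abs_of_nonneg (by linarith)]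
          have h5 : d₁ - d₂ ≤ ‖x₁ - x₂‖ := by
            have := le_abs_self (d₁ - d₂)
            linarith
          calc d₂^(-β) - d₁^(-β) ≤ β * d₂^(-β) * (d₁ - d₂) := hle
            _ ≤ (β * (3^β * W y)) * ‖x₁ - x₂‖ := by
                refine mul_le_mul (mul_le_mul_of_nonneg_left hw₂ hβ0.le) h5
                  (by linarith) (by positivity)
            _ = β * (3^β * W y) * ‖x₁ - x₂‖ := by ring
      have hG2 : |Fs p₂ - Fs (-p₂)| ≤ 2 * I0 := by
        have a1 := Fs_nonneg hFs' p₂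
        have a2 := Fs_le_I0 he hFs' p₂
        have a3 := Fs_nonneg hFs' (-p₂)
        have a4 := Fs_le_I0 he hFs' (-p₂)
        rw [← hI0def] at a2 a4
        rw [abs_le]; constructor <;> linarith
      have hGd : |(Fs p₁ - Fs (-p₁)) - (Fs p₂ - Fs (-p₂))| ≤ (2*L+1) * ‖x₁ - x₂‖ := by
        have t1 : |Fs p₁ - Fs p₂| ≤ L*‖x₁ - x₂‖ + ‖x₁ - x₂‖/2 :=
          (abs_sub_le _ (Fs q) _).trans (by linarith)
        have t2 : |Fs (-p₁) - Fs (-p₂)| ≤ L*‖x₁ - x₂‖ + ‖x₁ - x₂‖/2 :=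
          (abs_sub_le _ (Fs (-q)) _).trans (by linarith)
        have e1 : (Fs p₁ - Fs (-p₁)) - (Fs p₂ - Fs (-p₂))
            = (Fs p₁ - Fs p₂) - (Fs (-p₁) - Fs (-p₂)) := by ring
        rw [e1]
        calc |(Fs p₁ - Fs p₂) - (Fs (-p₁) - Fs (-p₂))|
            ≤ |Fs p₁ - Fs p₂| + |Fs (-p₁) - Fs (-p₂)| := abs_sub _ _
          _ ≤ (2*L+1) * ‖x₁ - x₂‖ := by linarith
      have hw₁0 : (0:ℝ) ≤ d₁^(-β) := Real.rpow_nonneg (by positivity) _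
      have e2 : (Fs p₁ - Fs (-p₁)) * d₁^(-β) - (Fs p₂ - Fs (-p₂)) * d₂^(-β)
          = ((Fs p₁ - Fs (-p₁)) - (Fs p₂ - Fs (-p₂))) * d₁^(-β)
            + (Fs p₂ - Fs (-p₂)) * (d₁^(-β) - d₂^(-β)) := by ring
      calc |(Fs p₁ - Fs (-p₁)) * d₁^(-β) - (Fs p₂ - Fs (-p₂)) * d₂^(-β)|
          ≤ |(Fs p₁ - Fs (-p₁)) - (Fs p₂ - Fs (-p₂))| * d₁^(-β)
            + |Fs p₂ - Fs (-p₂)| * |d₁^(-β) - d₂^(-β)| := by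
            rw [e2]
            refine (abs_add_le _ _).trans ?_
            rw [abs_mul, abs_mul, abs_of_nonneg hw₁0]
        _ ≤ ((2*L+1) * ‖x₁ - x₂‖) * (3^β * W y)
            + (2*I0) * (β * (3^β * W y) * ‖x₁ - x₂‖) := by
            refine add_le_add
              (mul_le_mul hGd hw₁ hw₁0 (mul_nonneg (by linarith) (norm_nonneg _)))
              (mul_le_mul hG2 hwd (abs_nonneg _) (by linarith))
        _ = ((2*L+1+2*I0*β)*3^β*‖x₁ - x₂‖) * W y := by ring
    have hb := norm_integral_le_of_norm_le (G := ℝ)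
      (f := fun y : EuclideanSpace ℝ (Fin N) =>
        (Fs ((u y - u x₁)/‖x₁ - y‖) - Fs (-((u y - u x₁)/‖x₁ - y‖))) * ‖x₁ - y‖ ^ (-β)
        - (Fs ((u y - u x₂)/‖x₂ - y‖) - Fs (-((u y - u x₂)/‖x₂ - y‖))) * ‖x₂ - y‖ ^ (-β))
      (g := fun y => ((2*L+1+2*I0*β)*3^β*‖x₁ - x₂‖) * W y)
      ((hWint.integrableOn (s := S)).const_mul _)
      (by filter_upwards [self_mem_ae_restrict hSmeas] with y hy
          rw [Real.norm_eq_abs]; exact hkey y hy)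
    refine hb.trans ?_
    rw [integral_const_mul, ← hIWsdef]
    -- final arithmetic
    have hKle : (2*L+1+2*I0*β)*3^β*IWs ≤ (C0 + 1) * (1 + L + M) := by
      have s1 : 3^β * IWs ≤ 3^β * (IW + 1) := mul_le_mul_of_nonneg_left hIWsle h3β.le
      have s0 : (0:ℝ) ≤ 3^β * (IW + 1) := mul_nonneg h3β.le (by linarith)
      have hA : 3^β * IWs * (1 + 2*I0*β) ≤ C0 := by
        rw [hC0def]
        calc 3^β * IWs * (1 + 2*I0*β) ≤ 3^β * (IW + 1) * (1 + 2*I0*β) :=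
              mul_le_mul_of_nonneg_right s1 (by nlinarith [mul_nonneg hI0 hβ0.le])
          _ ≤ 3^β * (IW + 1) * (2*I0 + 2*I0*β + 3) :=
              mul_le_mul_of_nonneg_left (by nlinarith) s0
      have hB : 3^β * IWs * 2 ≤ C0 := by
        rw [hC0def]
        calc 3^β * IWs * 2 ≤ 3^β * (IW + 1) * 2 :=
              mul_le_mul_of_nonneg_right s1 (by norm_num)
          _ ≤ 3^β * (IW + 1) * (2*I0 + 2*I0*β + 3) :=
              mul_le_mul_of_nonneg_left (by nlinarith [mul_nonneg hI0 hβ0.le]) s0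
      have e1 : (2*L+1+2*I0*β)*3^β*IWs
          = 3^β * IWs * (1 + 2*I0*β) + (3^β * IWs * 2) * L := by ring
      rw [e1]
      nlinarith [mul_nonneg hC0.le hM, mul_nonneg hC0.le hL,
        mul_le_mul_of_nonneg_right hB hL]
    calc (2*L+1+2*I0*β)*3^β*‖x₁ - x₂‖*IWs
        = ((2*L+1+2*I0*β)*3^β*IWs) * ‖x₁ - x₂‖ := by ring
      _ ≤ (C0 + 1) * (1 + L + M) * ‖x₁ - x₂‖ :=
          mul_le_mul_of_nonneg_right hKle (norm_nonneg _)
end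

section
/- Let Θ : (0,∞) → [0,∞) be nonincreasing, γ ∈ (0,1), and let g ∈ L²_{loc}(ℝ^N) satisfy ‖g - g_{B_r}‖²_{L²(B_r)} ≤ r^{N+2γ} Θ(r) for every r > 0, where g_{B_r} is the mean of g over B_r. Fix r₀ > 0 and define w(x) = Θ(r₀)^{-1/2} r₀^{-γ} (g(r₀ x) - (g)_{B_{r₀}}(r₀·-average)), i.e. the rescaled, recentered function w(x) = Θ(r₀)^{-1/2} r₀^{-γ}(g(r₀x) - |B₁|^{-1}∫_{B₁} g(r₀ξ)dξ). Then there is C = C(N, γ) with ‖w‖²_{L²(B_R)} ≤ C R^{N+2γ} for every R ≥ 1. -/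
open Set Metric MeasureTheory

section Aux

variable {N : ℕ}

lemma ball_scale (f : EuclideanSpace ℝ (Fin N) → ℝ) {c : ℝ} (hc : 0 < c) (R : ℝ) :
    ∫ x in ball (0 : EuclideanSpace ℝ (Fin N)) R, f (c • x)
      = (c ^ N)⁻¹ * ∫ y in ball (0 : EuclideanSpace ℝ (Fin N)) (c * R), f y := by
  have h := Measure.setIntegral_comp_smul_of_pos (volume) f
    (ball (0 : EuclideanSpace ℝ (Fin N)) R) hc
  rw [h, finrank_euclideanSpace_fin, _root_.smul_ball hc.ne', smul_zero]
  rw [Real.norm_of_nonneg hc.le, smul_eq_mul]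

lemma int_sq_shift {g : EuclideanSpace ℝ (Fin N) → ℝ} {r : ℝ}
    (hg : IntegrableOn g (ball (0 : EuclideanSpace ℝ (Fin N)) r))
    (hg2 : IntegrableOn (fun x => g x ^ 2) (ball (0 : EuclideanSpace ℝ (Fin N)) r))
    (c : ℝ) :
    IntegrableOn (fun x => (g x - c) ^ 2) (ball (0 : EuclideanSpace ℝ (Fin N)) r) := by
  have h : (fun x : EuclideanSpace ℝ (Fin N) => (g x - c) ^ 2)
      = fun x => g x ^ 2 + (-(2 * c)) * g x + c ^ 2 := by
    funext x; ring
  rw [h]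
  exact (hg2.add (hg.const_mul _)).add (integrableOn_const measure_ball_lt_top.ne)

lemma osc_shift {g : EuclideanSpace ℝ (Fin N) → ℝ} {r : ℝ}
    (hg : IntegrableOn g (ball (0 : EuclideanSpace ℝ (Fin N)) r))
    (hg2 : IntegrableOn (fun x => g x ^ 2) (ball (0 : EuclideanSpace ℝ (Fin N)) r))
    (a b : ℝ) :
    ∫ x in ball (0 : EuclideanSpace ℝ (Fin N)) r, (g x - a) ^ 2
      ≤ 2 * (∫ x in ball (0 : EuclideanSpace ℝ (Fin N)) r, (g x - b) ^ 2)
        + 2 * (a - b) ^ 2 * (volume (ball (0 : EuclideanSpace ℝ (Fin N)) r)).toReal := by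
  have hib := int_sq_shift hg hg2 b
  have h1 : ∫ x in ball (0 : EuclideanSpace ℝ (Fin N)) r, (g x - a) ^ 2
      ≤ ∫ x in ball (0 : EuclideanSpace ℝ (Fin N)) r, (2 * (g x - b) ^ 2 + 2 * (a - b) ^ 2) := by
    apply setIntegral_mono (int_sq_shift hg hg2 a)
      ((hib.const_mul 2).add (integrableOn_const measure_ball_lt_top.ne))
    intro x
    simp only [Pi.add_apply]
    nlinarith [sq_nonneg ((g x - b) - (b - a)), sq_nonneg (g x - b + (a - b))]
  have e1 : ∫ x in ball (0 : EuclideanSpace ℝ (Fin N)) r, (2 * (g x - b) ^ 2 + 2 * (a - b) ^ 2)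
      = 2 * (∫ x in ball (0 : EuclideanSpace ℝ (Fin N)) r, (g x - b) ^ 2)
        + 2 * (a - b) ^ 2 * (volume (ball (0 : EuclideanSpace ℝ (Fin N)) r)).toReal := by
    rw [integral_add (hib.const_mul 2) (integrableOn_const measure_ball_lt_top.ne),
      integral_const_mul, setIntegral_const, smul_eq_mul, measureReal_def]
    ring
  rw [e1] at h1
  exact h1

lemma mean_diff {g : EuclideanSpace ℝ (Fin N) → ℝ} {r : ℝ}
    (hg : IntegrableOn g (ball (0 : EuclideanSpace ℝ (Fin N)) r))
    (hg2 : IntegrableOn (fun x => g x ^ 2) (ball (0 : EuclideanSpace ℝ (Fin N)) r))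
    (a b : ℝ) :
    (a - b) ^ 2 * (volume (ball (0 : EuclideanSpace ℝ (Fin N)) r)).toReal
      ≤ 2 * (∫ x in ball (0 : EuclideanSpace ℝ (Fin N)) r, (g x - a) ^ 2)
        + 2 * (∫ x in ball (0 : EuclideanSpace ℝ (Fin N)) r, (g x - b) ^ 2) := by
  have h0 : (a - b) ^ 2 * (volume (ball (0 : EuclideanSpace ℝ (Fin N)) r)).toReal
      = ∫ _x in ball (0 : EuclideanSpace ℝ (Fin N)) r, (a - b) ^ 2 := by
    rw [setIntegral_const, smul_eq_mul, mul_comm, measureReal_def]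
  have h1 : ∫ _x in ball (0 : EuclideanSpace ℝ (Fin N)) r, (a - b) ^ 2
      ≤ ∫ x in ball (0 : EuclideanSpace ℝ (Fin N)) r, (2 * (g x - a) ^ 2 + 2 * (g x - b) ^ 2) := by
    apply setIntegral_mono (integrableOn_const measure_ball_lt_top.ne)
      (((int_sq_shift hg hg2 a).const_mul 2).add ((int_sq_shift hg hg2 b).const_mul 2))
    intro x
    simp only [Pi.add_apply]
    nlinarith [sq_nonneg ((g x - a) + (g x - b))]
  have e1 : ∫ x in ball (0 : EuclideanSpace ℝ (Fin N)) r, (2 * (g x - a) ^ 2 + 2 * (g x - b) ^ 2)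
      = 2 * (∫ x in ball (0 : EuclideanSpace ℝ (Fin N)) r, (g x - a) ^ 2)
        + 2 * (∫ x in ball (0 : EuclideanSpace ℝ (Fin N)) r, (g x - b) ^ 2) := by
    rw [integral_add ((int_sq_shift hg hg2 a).const_mul 2) ((int_sq_shift hg hg2 b).const_mul 2),
      integral_const_mul, integral_const_mul]
  rw [h0]
  rw [e1] at h1
  exact h1

lemma pow_split (N : ℕ) (γ : ℝ) (k : ℕ) :
    ((2:ℝ) ^ k) ^ ((N:ℝ) + 2 * γ) = ((2:ℝ) ^ k) ^ N * (((2:ℝ) ^ γ) ^ k) ^ 2 := by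
  have h2 : (0:ℝ) < 2 := two_pos
  rw [← Real.rpow_natCast (2:ℝ) k, ← Real.rpow_natCast ((2:ℝ) ^ (k:ℝ)) N,
    ← Real.rpow_natCast ((2:ℝ) ^ γ) k, ← Real.rpow_mul h2.le, ← Real.rpow_mul h2.le,
    ← Real.rpow_mul h2.le, ← Real.rpow_natCast ((2:ℝ) ^ (γ * (k:ℝ))) 2,
    ← Real.rpow_mul h2.le, ← Real.rpow_add h2]
  congr 1
  push_cast
  ring

lemma rpow_split {x : ℝ} (hx : 0 < x) (N : ℕ) (γ : ℝ) :
    x ^ ((N:ℝ) + 2 * γ) = x ^ N * x ^ (2 * γ) := by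
  rw [Real.rpow_add hx, Real.rpow_natCast]

end Aux

set_option maxHeartbeats 2000000 in
/-- Scaling lemma.  Let `Θ : (0,∞) → [0,∞)` be nonincreasing, `γ ∈ (0,1)`, and let
`g ∈ L²_loc(ℝ^N)` satisfy `‖g - g_{B_r}‖²_{L²(B_r)} ≤ r^{N+2γ} Θ(r)` for all `r > 0`.
Fix `r₀ > 0` (with `Θ(r₀) > 0`) and set
`w(x) = Θ(r₀)^{-1/2} r₀^{-γ} (g(r₀ x) - ⨍_{B₁} g(r₀ ξ) dξ)`.
Then there is `C = C(N,γ)` with `‖w‖²_{L²(B_R)} ≤ C R^{N+2γ}` for all `R ≥ 1`. -/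
theorem stmt_12 (N : ℕ) (hN : 1 ≤ N) (γ : ℝ) (hγ : γ ∈ Set.Ioo (0:ℝ) 1) :
    ∃ C > 0, ∀ (Θ : ℝ → ℝ) (g : EuclideanSpace ℝ (Fin N) → ℝ) (r₀ : ℝ),
      (∀ r, 0 ≤ Θ r) →
      (∀ r₁ r₂ : ℝ, 0 < r₁ → r₁ ≤ r₂ → Θ r₂ ≤ Θ r₁) →
      (∀ r > 0, IntegrableOn g (Metric.ball (0 : EuclideanSpace ℝ (Fin N)) r)) →
      (∀ r > 0, IntegrableOn (fun x => g x ^ 2)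
        (Metric.ball (0 : EuclideanSpace ℝ (Fin N)) r)) →
      (∀ r > 0, ∫ x in Metric.ball (0 : EuclideanSpace ℝ (Fin N)) r,
          (g x - ⨍ y in Metric.ball (0 : EuclideanSpace ℝ (Fin N)) r, g y) ^ 2 ≤
            r ^ ((N : ℝ) + 2 * γ) * Θ r) →
      0 < r₀ → 0 < Θ r₀ →
      ∀ R ≥ (1 : ℝ),
        ∫ x in Metric.ball (0 : EuclideanSpace ℝ (Fin N)) R,
          ((Θ r₀) ^ (-(1/2) : ℝ) * r₀ ^ (-γ) *
            (g (r₀ • x) - ⨍ y in Metric.ball (0 : EuclideanSpace ℝ (Fin N)) 1, g (r₀ • y))) ^ 2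
          ≤ C * R ^ ((N : ℝ) + 2 * γ) := by
  obtain ⟨hγ0, hγ1⟩ := hγ
  haveI : Nonempty (Fin N) := ⟨⟨0, hN⟩⟩
  haveI : Nontrivial (EuclideanSpace ℝ (Fin N)) := by infer_instance
  obtain ⟨vB1, hvB1def⟩ : ∃ v : ℝ, v = (volume (ball (0 : EuclideanSpace ℝ (Fin N)) 1)).toReal :=
    ⟨_, rfl⟩
  have hvB1 : 0 < vB1 := by
    rw [hvB1def]
    exact ENNReal.toReal_pos (measure_ball_pos volume _ one_pos).ne' measure_ball_lt_top.ne
  obtain ⟨q, hqdef⟩ : ∃ x : ℝ, x = (2:ℝ) ^ γ := ⟨_, rfl⟩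
  have hq : 1 < q := by
    rw [hqdef]
    have := Real.rpow_lt_rpow_of_exponent_lt (by norm_num : (1:ℝ) < 2) hγ0
    simpa using this
  have hq0 : 0 < q := lt_trans one_pos hq
  have hq1 : 0 < q - 1 := sub_pos.mpr hq
  have h2e : (0:ℝ) < (2:ℝ) ^ ((N:ℝ) + 2 * γ) := Real.rpow_pos_of_pos two_pos _
  obtain ⟨D2, hD2def⟩ : ∃ x : ℝ, x = 4 * (2:ℝ) ^ ((N:ℝ) + 2 * γ) / vB1 := ⟨_, rfl⟩
  have hD2 : 0 < D2 := by rw [hD2def]; exact div_pos (by linarith) hvB1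
  obtain ⟨C1, hC1def⟩ : ∃ x : ℝ, x = 2 + 2 * vB1 * (D2 / (q - 1) ^ 2) := ⟨_, rfl⟩
  have hC1 : 0 < C1 := by
    have h1 : 0 ≤ 2 * vB1 * (D2 / (q - 1) ^ 2) :=
      mul_nonneg (by linarith) (div_nonneg hD2.le (sq_nonneg _))
    rw [hC1def]; linarith
  refine ⟨C1 * (2:ℝ) ^ ((N:ℝ) + 2 * γ), mul_pos hC1 h2e, ?_⟩
  intro Θ g r₀ hΘ0 hΘm hg hg2 hosc hr₀ hΘ R hR
  have hR0 : (0:ℝ) < R := lt_of_lt_of_le one_pos hR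
  have heNN : (0:ℝ) ≤ (N:ℝ) + 2 * γ := by
    have : (0:ℝ) ≤ (N:ℝ) := Nat.cast_nonneg N
    linarith
  obtain ⟨m, hmdef⟩ : ∃ f : ℝ → ℝ,
      f = fun ρ => ⨍ y in ball (0 : EuclideanSpace ℝ (Fin N)) ρ, g y := ⟨_, rfl⟩
  -- volume of balls
  have hVol : ∀ ρ : ℝ, 0 < ρ →
      (volume (ball (0 : EuclideanSpace ℝ (Fin N)) ρ)).toReal = ρ ^ N * vB1 := by
    intro ρ hρ
    rw [Measure.addHaar_ball volume _ hρ.le, finrank_euclideanSpace_fin,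
      ENNReal.toReal_mul, ENNReal.toReal_ofReal (by positivity), ← hvB1def]
  -- oscillation bound at all scales ≥ r₀
  have ha : ∀ ρ : ℝ, r₀ ≤ ρ →
      ∫ x in ball (0 : EuclideanSpace ℝ (Fin N)) ρ, (g x - m ρ) ^ 2
        ≤ ρ ^ ((N:ℝ) + 2 * γ) * Θ r₀ := by
    intro ρ hρ
    have hρ0 : 0 < ρ := lt_of_lt_of_le hr₀ hρ
    simp only [hmdef]
    refine (hosc ρ hρ0).trans ?_
    exact mul_le_mul_of_nonneg_left (hΘm r₀ ρ hr₀ hρ) (Real.rpow_nonneg hρ0.le _)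
  obtain ⟨Dd, hDddef⟩ : ∃ x : ℝ, x = Real.sqrt (D2 * Θ r₀) * r₀ ^ γ := ⟨_, rfl⟩
  have hDdnn : 0 ≤ Dd := by
    rw [hDddef]; exact mul_nonneg (Real.sqrt_nonneg _) (Real.rpow_nonneg hr₀.le _)
  have hrγ2 : (r₀ ^ γ) ^ 2 = r₀ ^ (2 * γ) := by
    rw [← Real.rpow_natCast (r₀ ^ γ) 2, ← Real.rpow_mul hr₀.le]
    norm_num [mul_comm]
  have hDd2 : Dd ^ 2 = D2 * Θ r₀ * r₀ ^ (2 * γ) := by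
    rw [hDddef, mul_pow, Real.sq_sqrt (mul_nonneg hD2.le hΘ.le), hrγ2]
  -- dyadic mean differences
  have hdiff : ∀ k : ℕ, |m ((2:ℝ) ^ (k+1) * r₀) - m ((2:ℝ) ^ k * r₀)| ≤ Dd * q ^ k := by
    intro k
    have hρ0 : (0:ℝ) < 2 ^ k * r₀ := mul_pos (pow_pos two_pos k) hr₀
    have hρ'0 : (0:ℝ) < 2 ^ (k+1) * r₀ := mul_pos (pow_pos two_pos (k+1)) hr₀
    have h2k : (1:ℝ) ≤ 2 ^ k := one_le_pow₀ one_le_two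
    have hle : (2:ℝ) ^ k * r₀ ≤ 2 ^ (k+1) * r₀ := by
      have : (2:ℝ) ^ k ≤ 2 ^ (k+1) := by
        rw [pow_succ]; nlinarith
      nlinarith
    have hr₀le : r₀ ≤ (2:ℝ) ^ k * r₀ := le_mul_of_one_le_left hr₀.le h2k
    have h1 := mean_diff (hg _ hρ0) (hg2 _ hρ0) (m ((2:ℝ) ^ (k+1) * r₀)) (m ((2:ℝ) ^ k * r₀))
    have h2 : ∫ x in ball (0 : EuclideanSpace ℝ (Fin N)) ((2:ℝ) ^ k * r₀),
          (g x - m ((2:ℝ) ^ (k+1) * r₀)) ^ 2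
        ≤ ∫ x in ball (0 : EuclideanSpace ℝ (Fin N)) ((2:ℝ) ^ (k+1) * r₀),
          (g x - m ((2:ℝ) ^ (k+1) * r₀)) ^ 2 :=
      setIntegral_mono_set (int_sq_shift (hg _ hρ'0) (hg2 _ hρ'0) _)
        (Filter.Eventually.of_forall fun x => sq_nonneg _)
        (HasSubset.Subset.eventuallyLE (ball_subset_ball hle))
    have h3 := ha _ (hr₀le.trans hle)
    have h4 := ha _ hr₀le
    have h5 : ((2:ℝ) ^ k * r₀) ^ ((N:ℝ) + 2 * γ) ≤ ((2:ℝ) ^ (k+1) * r₀) ^ ((N:ℝ) + 2 * γ) :=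
      Real.rpow_le_rpow hρ0.le hle heNN
    have hV := hVol _ hρ0
    have hVpos : (0:ℝ) < ((2:ℝ) ^ k * r₀) ^ N * vB1 := mul_pos (pow_pos hρ0 N) hvB1
    rw [hV] at h1
    have h6 : (m ((2:ℝ) ^ (k+1) * r₀) - m ((2:ℝ) ^ k * r₀)) ^ 2
        ≤ 4 * ((2:ℝ) ^ (k+1) * r₀) ^ ((N:ℝ) + 2 * γ) * Θ r₀ / (((2:ℝ) ^ k * r₀) ^ N * vB1) := by
      rw [le_div_iff₀ hVpos]
      have hb : ∫ x in ball (0 : EuclideanSpace ℝ (Fin N)) ((2:ℝ) ^ k * r₀),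
            (g x - m ((2:ℝ) ^ (k+1) * r₀)) ^ 2
          ≤ ((2:ℝ) ^ (k+1) * r₀) ^ ((N:ℝ) + 2 * γ) * Θ r₀ := h2.trans h3
      have hc : ∫ x in ball (0 : EuclideanSpace ℝ (Fin N)) ((2:ℝ) ^ k * r₀),
            (g x - m ((2:ℝ) ^ k * r₀)) ^ 2
          ≤ ((2:ℝ) ^ (k+1) * r₀) ^ ((N:ℝ) + 2 * γ) * Θ r₀ :=
        h4.trans (mul_le_mul_of_nonneg_right h5 hΘ.le)
      linarith
    have h7 : 4 * ((2:ℝ) ^ (k+1) * r₀) ^ ((N:ℝ) + 2 * γ) * Θ r₀ / (((2:ℝ) ^ k * r₀) ^ N * vB1)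
        = (Dd * q ^ k) ^ 2 := by
      have e1 : ((2:ℝ) ^ (k+1) * r₀) ^ ((N:ℝ) + 2 * γ)
          = ((2:ℝ) ^ (k+1)) ^ ((N:ℝ) + 2 * γ) * r₀ ^ ((N:ℝ) + 2 * γ) :=
        Real.mul_rpow (by positivity) hr₀.le
      have e2 : ((2:ℝ) ^ (k+1)) ^ ((N:ℝ) + 2 * γ)
          = ((2:ℝ) ^ k) ^ N * (q ^ k) ^ 2 * (2:ℝ) ^ ((N:ℝ) + 2 * γ) := by
        rw [pow_succ, Real.mul_rpow (by positivity) (by norm_num), pow_split N γ k, ← hqdef]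
      have e3 : r₀ ^ ((N:ℝ) + 2 * γ) = r₀ ^ N * r₀ ^ (2 * γ) := rpow_split hr₀ N γ
      have e4 : ((2:ℝ) ^ k * r₀) ^ N = ((2:ℝ) ^ k) ^ N * r₀ ^ N := mul_pow _ _ _
      rw [e1, e2, e3, e4, mul_pow Dd (q ^ k), hDd2, hD2def]
      have hA : (0:ℝ) < ((2:ℝ) ^ k) ^ N := by positivity
      have hrN : (0:ℝ) < r₀ ^ N := pow_pos hr₀ N
      field_simp
    have h8 : (m ((2:ℝ) ^ (k+1) * r₀) - m ((2:ℝ) ^ k * r₀)) ^ 2 ≤ (Dd * q ^ k) ^ 2 :=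
      h6.trans_eq h7
    calc |m ((2:ℝ) ^ (k+1) * r₀) - m ((2:ℝ) ^ k * r₀)|
        = Real.sqrt ((m ((2:ℝ) ^ (k+1) * r₀) - m ((2:ℝ) ^ k * r₀)) ^ 2) :=
          (Real.sqrt_sq_eq_abs _).symm
      _ ≤ Real.sqrt ((Dd * q ^ k) ^ 2) := Real.sqrt_le_sqrt h8
      _ = Dd * q ^ k := Real.sqrt_sq (mul_nonneg hDdnn (pow_nonneg hq0.le k))
  -- choice of K
  obtain ⟨K, hRK, hKR⟩ : ∃ K : ℕ, R ≤ 2 ^ K ∧ (2:ℝ) ^ K ≤ 2 * R := by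
    refine ⟨⌈Real.logb 2 R⌉₊, ?_, ?_⟩
    · rw [← Real.rpow_natCast (2:ℝ)]
      calc R = (2:ℝ) ^ Real.logb 2 R := (Real.rpow_logb two_pos (by norm_num) hR0).symm
        _ ≤ (2:ℝ) ^ (⌈Real.logb 2 R⌉₊ : ℝ) :=
          Real.rpow_le_rpow_of_exponent_le one_le_two (Nat.le_ceil _)
    · rw [← Real.rpow_natCast (2:ℝ)]
      have h2 : ((⌈Real.logb 2 R⌉₊ : ℝ)) ≤ Real.logb 2 R + 1 :=
        (Nat.ceil_lt_add_one (Real.logb_nonneg one_lt_two hR)).le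
      calc (2:ℝ) ^ ((⌈Real.logb 2 R⌉₊ : ℝ)) ≤ (2:ℝ) ^ (Real.logb 2 R + 1) :=
          Real.rpow_le_rpow_of_exponent_le one_le_two h2
        _ = 2 * R := by
          rw [Real.rpow_add two_pos, Real.rpow_one,
            Real.rpow_logb two_pos (by norm_num) hR0]
          ring
  -- telescoping
  have htel : |m ((2:ℝ) ^ K * r₀) - m r₀| ≤ Dd * q ^ K / (q - 1) := by
    calc |m ((2:ℝ) ^ K * r₀) - m r₀|
        = |∑ k ∈ Finset.range K, (m ((2:ℝ) ^ (k+1) * r₀) - m ((2:ℝ) ^ k * r₀))| := by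
          congr 1
          rw [Finset.sum_range_sub (fun k => m ((2:ℝ) ^ k * r₀)) K]
          norm_num
      _ ≤ ∑ k ∈ Finset.range K, |m ((2:ℝ) ^ (k+1) * r₀) - m ((2:ℝ) ^ k * r₀)| :=
          Finset.abs_sum_le_sum_abs _ _
      _ ≤ ∑ k ∈ Finset.range K, Dd * q ^ k :=
          Finset.sum_le_sum fun k _ => hdiff k
      _ = Dd * ((q ^ K - 1) / (q - 1)) := by rw [← Finset.mul_sum, geom_sum_eq hq.ne' K]
      _ ≤ Dd * (q ^ K / (q - 1)) := by
          exact mul_le_mul_of_nonneg_left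
            (div_le_div_of_nonneg_right (by linarith [pow_pos hq0 K] : q ^ K - 1 ≤ q ^ K) hq1.le)
            hDdnn
      _ = Dd * q ^ K / (q - 1) := (mul_div_assoc _ _ _).symm
  have hMsq : (m r₀ - m ((2:ℝ) ^ K * r₀)) ^ 2 ≤ (Dd * q ^ K / (q - 1)) ^ 2 := by
    have h := pow_le_pow_left₀ (abs_nonneg _) htel 2
    rw [sq_abs] at h
    calc (m r₀ - m ((2:ℝ) ^ K * r₀)) ^ 2 = (m ((2:ℝ) ^ K * r₀) - m r₀) ^ 2 := by ring
      _ ≤ _ := h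
  -- step D
  have hS0 : (0:ℝ) < 2 ^ K * r₀ := mul_pos (pow_pos two_pos K) hr₀
  have h2K1 : (1:ℝ) ≤ 2 ^ K := one_le_pow₀ one_le_two
  have hr₀S : r₀ ≤ (2:ℝ) ^ K * r₀ := le_mul_of_one_le_left hr₀.le h2K1
  have hI1 : ∫ y in ball (0 : EuclideanSpace ℝ (Fin N)) (r₀ * R), (g y - m r₀) ^ 2
      ≤ ∫ y in ball (0 : EuclideanSpace ℝ (Fin N)) ((2:ℝ) ^ K * r₀), (g y - m r₀) ^ 2 :=
    setIntegral_mono_set (int_sq_shift (hg _ hS0) (hg2 _ hS0) _)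
      (Filter.Eventually.of_forall fun x => sq_nonneg _)
      (HasSubset.Subset.eventuallyLE (ball_subset_ball (by nlinarith [mul_le_mul_of_nonneg_left hRK hr₀.le])))
  have hI2 := osc_shift (hg _ hS0) (hg2 _ hS0) (m r₀) (m ((2:ℝ) ^ K * r₀))
  have hI3 := ha _ hr₀S
  have hVS := hVol _ hS0
  rw [hVS] at hI2
  have hVnn : (0:ℝ) ≤ ((2:ℝ) ^ K * r₀) ^ N * vB1 := (mul_pos (pow_pos hS0 N) hvB1).le
  have hkey : 2 * (((2:ℝ) ^ K * r₀) ^ ((N:ℝ) + 2 * γ) * Θ r₀)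
      + 2 * (Dd * q ^ K / (q - 1)) ^ 2 * (((2:ℝ) ^ K * r₀) ^ N * vB1)
      = C1 * Θ r₀ * ((2:ℝ) ^ K * r₀) ^ ((N:ℝ) + 2 * γ) := by
    have e1 : ((2:ℝ) ^ K * r₀) ^ ((N:ℝ) + 2 * γ)
        = ((2:ℝ) ^ K) ^ N * (q ^ K) ^ 2 * (r₀ ^ N * r₀ ^ (2 * γ)) := by
      rw [Real.mul_rpow (by positivity) hr₀.le, pow_split N γ K, ← hqdef,
        rpow_split hr₀ N γ]
    have e2 : (Dd * q ^ K / (q - 1)) ^ 2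
        = D2 * Θ r₀ * r₀ ^ (2 * γ) * (q ^ K) ^ 2 / (q - 1) ^ 2 := by
      rw [div_pow, mul_pow Dd (q ^ K), hDd2]
    have e4 : ((2:ℝ) ^ K * r₀) ^ N = ((2:ℝ) ^ K) ^ N * r₀ ^ N := mul_pow _ _ _
    rw [e1, e2, e4, hC1def]
    simp only [div_eq_mul_inv]
    ring
  have hIS : ∫ y in ball (0 : EuclideanSpace ℝ (Fin N)) (r₀ * R), (g y - m r₀) ^ 2
      ≤ C1 * Θ r₀ * ((2:ℝ) ^ K * r₀) ^ ((N:ℝ) + 2 * γ) := by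
    refine (hI1.trans hI2).trans ?_
    rw [← hkey]
    exact add_le_add (mul_le_mul_of_nonneg_left hI3 (by norm_num))
      (mul_le_mul_of_nonneg_right (mul_le_mul_of_nonneg_left hMsq (by norm_num)) hVnn)
  have hSe : ((2:ℝ) ^ K * r₀) ^ ((N:ℝ) + 2 * γ)
      ≤ (2:ℝ) ^ ((N:ℝ) + 2 * γ) * R ^ ((N:ℝ) + 2 * γ) * r₀ ^ ((N:ℝ) + 2 * γ) := by
    have hle : (2:ℝ) ^ K * r₀ ≤ 2 * R * r₀ := by
      nlinarith [mul_le_mul_of_nonneg_right hKR hr₀.le]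
    calc ((2:ℝ) ^ K * r₀) ^ ((N:ℝ) + 2 * γ) ≤ (2 * R * r₀) ^ ((N:ℝ) + 2 * γ) :=
        Real.rpow_le_rpow hS0.le hle heNN
      _ = (2:ℝ) ^ ((N:ℝ) + 2 * γ) * R ^ ((N:ℝ) + 2 * γ) * r₀ ^ ((N:ℝ) + 2 * γ) := by
        rw [Real.mul_rpow (by nlinarith : (0:ℝ) ≤ 2 * R) hr₀.le, Real.mul_rpow (by norm_num) hR0.le]
  have hI : ∫ y in ball (0 : EuclideanSpace ℝ (Fin N)) (r₀ * R), (g y - m r₀) ^ 2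
      ≤ C1 * Θ r₀ * ((2:ℝ) ^ ((N:ℝ) + 2 * γ) * R ^ ((N:ℝ) + 2 * γ) * r₀ ^ ((N:ℝ) + 2 * γ)) := by
    refine hIS.trans ?_
    exact mul_le_mul_of_nonneg_left hSe (mul_nonneg hC1.le hΘ.le)
  -- step E : identify LHS
  have hmm : (⨍ y in ball (0 : EuclideanSpace ℝ (Fin N)) 1, g (r₀ • y)) = m r₀ := by
    simp only [hmdef]
    rw [setAverage_eq, setAverage_eq, ball_scale g hr₀ 1, mul_one, measureReal_def, measureReal_def, hVol r₀ hr₀,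
      smul_eq_mul, smul_eq_mul, mul_inv, ← hvB1def]
    ring
  have hsc : ∫ x in ball (0 : EuclideanSpace ℝ (Fin N)) R, (g (r₀ • x) - m r₀) ^ 2
      = (r₀ ^ N)⁻¹ * ∫ y in ball (0 : EuclideanSpace ℝ (Fin N)) (r₀ * R), (g y - m r₀) ^ 2 :=
    ball_scale (fun y => (g y - m r₀) ^ 2) hr₀ R
  have hsq1 : ((Θ r₀) ^ (-(1/2) : ℝ)) ^ 2 = (Θ r₀)⁻¹ := by
    rw [← Real.rpow_natCast ((Θ r₀) ^ (-(1/2) : ℝ)) 2, ← Real.rpow_mul hΘ.le]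
    norm_num [Real.rpow_neg_one]
  have hsq2 : (r₀ ^ (-γ)) ^ 2 = (r₀ ^ (2 * γ))⁻¹ := by
    rw [← Real.rpow_natCast (r₀ ^ (-γ)) 2, ← Real.rpow_mul hr₀.le,
      (by ring : -γ * (2:ℕ) = -(2 * γ)), Real.rpow_neg hr₀.le]
  rw [hmm]
  simp only [mul_pow]
  rw [integral_const_mul, hsc, hsq1, hsq2]
  have hrγpos : (0:ℝ) < r₀ ^ (2 * γ) := Real.rpow_pos_of_pos hr₀ _
  have hrNpos : (0:ℝ) < r₀ ^ N := pow_pos hr₀ N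
  have hmain : (Θ r₀)⁻¹ * (r₀ ^ (2 * γ))⁻¹ * ((r₀ ^ N)⁻¹ *
      ∫ y in ball (0 : EuclideanSpace ℝ (Fin N)) (r₀ * R), (g y - m r₀) ^ 2)
      ≤ (Θ r₀)⁻¹ * (r₀ ^ (2 * γ))⁻¹ * ((r₀ ^ N)⁻¹ *
        (C1 * Θ r₀ * ((2:ℝ) ^ ((N:ℝ) + 2 * γ) * R ^ ((N:ℝ) + 2 * γ) * r₀ ^ ((N:ℝ) + 2 * γ)))) := by
    apply mul_le_mul_of_nonneg_left _
      (mul_nonneg (inv_nonneg.mpr hΘ.le) (inv_nonneg.mpr hrγpos.le))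
    exact mul_le_mul_of_nonneg_left hI (inv_nonneg.mpr hrNpos.le)
  refine hmain.trans (le_of_eq ?_)
  rw [rpow_split hr₀ N γ]
  field_simp
end
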